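/- Let C be a cycle (a set of edges forming a cycle) in a graph and D ⊆ C a subset of odd cardinality. Then the odd cycle inequality Σ_{u∈V_0} x_u − Σ_{u∈V_1} x_u + Σ_{e∈C\D} y_e − Σ_{e∈D} y_e ≤ (|D|−1)/2 holds for all binary x with y_{ij} = x_i x_j, where V_0 is the set of vertices incident to two edges of D and V_1 the set of vertices incident to two edges of C\D. -/
import Mathlib


/-- Padberg's odd cycle inequality: for a cycle with vertices `v 0, …, v (m−1)`
(edge `i` joining `v i` and `v (i+1)`, cyclically) and a set `D` of edges of odd
cardinality, the inequality
`∑_{u∈V₀} x_u − ∑_{u∈V₁} x_u + ∑_{e∉D} y_e − ∑_{e∈D} y_e ≤ (|D|−1)/2`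
holds at every binary point with `y_{ij} = x_i x_j`, where `V₀` (resp. `V₁`) consists
of the vertices whose two incident cycle edges both lie in `D` (resp. both outside `D`). -/
theorem stmt13 (n m : ℕ) [NeZero m] (hm : 3 ≤ m)
    (v : Fin m → Fin n) (hv : Function.Injective v)
    (D : Finset (Fin m)) (hD : Odd D.card)
    (x : Fin n → ℝ) (hx : ∀ a, x a = 0 ∨ x a = 1) :
    (∑ j ∈ Finset.univ.filter (fun j : Fin m => j - 1 ∈ D ∧ j ∈ D), x (v j))
      - (∑ j ∈ Finset.univ.filter (fun j : Fin m => j - 1 ∉ D ∧ j ∉ D), x (v j))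
      + (∑ i ∈ Finset.univ.filter (fun i : Fin m => i ∉ D), x (v i) * x (v (i + 1)))
      - (∑ i ∈ D, x (v i) * x (v (i + 1)))
      ≤ ((D.card : ℝ) - 1) / 2 := by
  classical
  set a : Fin m → ℝ := fun j => x (v j) with ha
  have ha01 : ∀ j, a j = 0 ∨ a j = 1 := fun j => hx (v j)
  set s : Fin m → ℝ := fun i => if i ∈ D then 1 else -1 with hs
  set P : Fin m → Prop := fun i => a i ≠ a (i + 1) with hP
  -- Step 1: rewrite the LHS as a single sum over univ
  have step1 :
      (∑ j ∈ Finset.univ.filter (fun j : Fin m => j - 1 ∈ D ∧ j ∈ D), a j)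
      - (∑ j ∈ Finset.univ.filter (fun j : Fin m => j - 1 ∉ D ∧ j ∉ D), a j)
      + (∑ i ∈ Finset.univ.filter (fun i : Fin m => i ∉ D), a i * a (i + 1))
      - (∑ i ∈ D, a i * a (i + 1))
      = ∑ j : Fin m, ((if j - 1 ∈ D ∧ j ∈ D then a j else 0)
          - (if j - 1 ∉ D ∧ j ∉ D then a j else 0)
          + (if j ∉ D then a j * a (j + 1) else 0)
          - (if j ∈ D then a j * a (j + 1) else 0)) := by
    rw [Finset.sum_sub_distrib, Finset.sum_add_distrib, Finset.sum_sub_distrib]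
    congr 1
    · congr 1
      · congr 1 <;> rw [Finset.sum_filter]
      · rw [Finset.sum_filter]
    · rw [Finset.sum_ite_mem, Finset.univ_inter]
  -- Step 2: pointwise identity
  have step2 : ∀ j : Fin m,
      ((if j - 1 ∈ D ∧ j ∈ D then a j else 0)
          - (if j - 1 ∉ D ∧ j ∉ D then a j else 0)
          + (if j ∉ D then a j * a (j + 1) else 0)
          - (if j ∈ D then a j * a (j + 1) else 0))
      = (s j * a j / 2 - s j * a j * a (j + 1)) + s (j - 1) * a j / 2 := by
    intro j
    by_cases h1 : j - 1 ∈ D <;> by_cases h2 : j ∈ D <;> simp [hs, h1, h2] <;> ring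
  -- Step 3: reindex to get per-edge form
  have reindex : ∑ j : Fin m, s (j - 1) * a j / 2 = ∑ i : Fin m, s i * a (i + 1) / 2 := by
    apply Fintype.sum_equiv (Equiv.subRight (1 : Fin m)) _ _
    intro i
    simp
  have step3 :
      (∑ j : Fin m, ((if j - 1 ∈ D ∧ j ∈ D then a j else 0)
          - (if j - 1 ∉ D ∧ j ∉ D then a j else 0)
          + (if j ∉ D then a j * a (j + 1) else 0)
          - (if j ∈ D then a j * a (j + 1) else 0)))
      = ∑ i : Fin m, s i * (a i + a (i + 1) - 2 * a i * a (i + 1)) / 2 := by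
    calc (∑ j : Fin m, ((if j - 1 ∈ D ∧ j ∈ D then a j else 0)
          - (if j - 1 ∉ D ∧ j ∉ D then a j else 0)
          + (if j ∉ D then a j * a (j + 1) else 0)
          - (if j ∈ D then a j * a (j + 1) else 0)))
        = ∑ j : Fin m, ((s j * a j / 2 - s j * a j * a (j + 1)) + s (j - 1) * a j / 2) :=
          Finset.sum_congr rfl (fun j _ => step2 j)
      _ = (∑ j : Fin m, (s j * a j / 2 - s j * a j * a (j + 1)))
            + ∑ j : Fin m, s (j - 1) * a j / 2 := Finset.sum_add_distrib
      _ = (∑ j : Fin m, (s j * a j / 2 - s j * a j * a (j + 1)))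
            + ∑ i : Fin m, s i * a (i + 1) / 2 := by rw [reindex]
      _ = ∑ i : Fin m, ((s i * a i / 2 - s i * a i * a (i + 1)) + s i * a (i + 1) / 2) :=
          Finset.sum_add_distrib.symm
      _ = ∑ i : Fin m, s i * (a i + a (i + 1) - 2 * a i * a (i + 1)) / 2 :=
          Finset.sum_congr rfl (fun i _ => by ring)
  -- χ as an indicator
  have hchi : ∀ i : Fin m, a i + a (i + 1) - 2 * a i * a (i + 1)
      = if P i then 1 else 0 := by
    intro i
    rcases ha01 i with h | h <;> rcases ha01 (i + 1) with h' | h' <;>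
      simp [hP, h, h'] <;> norm_num
  -- Counting sets
  set E : Finset (Fin m) := Finset.univ.filter (fun i => i ∈ D ∧ P i) with hE
  set F : Finset (Fin m) := Finset.univ.filter (fun i => i ∉ D ∧ P i) with hF
  set N : Finset (Fin m) := Finset.univ.filter P with hN
  have step4 : ∑ i : Fin m, s i * (a i + a (i + 1) - 2 * a i * a (i + 1)) / 2
      = ((E.card : ℝ) - F.card) / 2 := by
    rw [← Finset.sum_div]
    congr 1
    have : ∀ i : Fin m, s i * (a i + a (i + 1) - 2 * a i * a (i + 1))
        = (if i ∈ D ∧ P i then (1:ℝ) else 0) - (if i ∉ D ∧ P i then (1:ℝ) else 0) := by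
      intro i
      rw [hchi i]
      by_cases h1 : i ∈ D <;> by_cases h2 : P i <;> simp [hs, h1, h2] <;>
        (try split_ifs) <;> norm_num
    rw [Finset.sum_congr rfl (fun i _ => this i), Finset.sum_sub_distrib]
    congr 1 <;> rw [← Finset.sum_filter] <;> simp [hE, hF]
  -- parity : N.card is even
  have parity : Even N.card := by
    set b : Fin m → ZMod 2 := fun i => if x (v i) = 1 then 1 else 0 with hb
    have hb2 : ∀ i : Fin m, (if P i then (1 : ZMod 2) else 0) = b i + b (i + 1) := by
      intro i
      rcases ha01 i with h | h <;> rcases ha01 (i + 1) with h' | h' <;>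
        simp only [ha] at h h' <;> simp [hP, hb, ha, h, h'] <;> decide
    have : ((N.card : ZMod 2)) = 0 := by
      have e1 : ((N.card : ZMod 2)) = ∑ i : Fin m, (if P i then (1 : ZMod 2) else 0) := by
        rw [Finset.sum_boole, hN]
      rw [e1, Finset.sum_congr rfl (fun i _ => hb2 i), Finset.sum_add_distrib]
      have e2 : ∑ i : Fin m, b (i + 1) = ∑ i : Fin m, b i :=
        Fintype.sum_equiv (Equiv.addRight (1 : Fin m)) _ _ (fun i => rfl)
      rw [e2, ← two_mul]
      rw [show (2 : ZMod 2) = 0 from rfl, zero_mul]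
    rw [ZMod.natCast_eq_zero_iff] at this
    obtain ⟨k, hk⟩ := this
    exact ⟨k, by omega⟩
  -- basic cardinality facts
  have hED : E.card ≤ D.card := by
    apply Finset.card_le_card
    intro i hi
    exact ((Finset.mem_filter.mp hi).2).1
  have hEFN : E.card + F.card = N.card := by
    have e1 : E = N.filter (fun i => i ∈ D) := by
      ext i; simp [hE, hN]; tauto
    have e2 : F = N.filter (fun i => ¬ i ∈ D) := by
      ext i; simp [hF, hN]; tauto
    rw [e1, e2]
    exact Finset.card_filter_add_card_filter_not _
  have hD1 : 1 ≤ D.card := by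
    rcases hD with ⟨k, hk⟩; omega
  -- the key bound
  have bound : (E.card : ℝ) - F.card ≤ (D.card : ℝ) - 1 := by
    rcases Nat.eq_zero_or_pos F.card with hF0 | hF1
    · have hEN : E.card = N.card := by omega
      have : E.card ≠ D.card := by
        intro h
        rw [hEN] at h
        rcases parity with ⟨k, hk⟩
        rcases hD with ⟨l, hl⟩
        omega
      have : E.card + 1 ≤ D.card := by omega
      have := (Nat.cast_le (α := ℝ)).mpr this
      push_cast at this ⊢
      rw [hF0]
      push_cast
      linarith
    · have := (Nat.cast_le (α := ℝ)).mpr hED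
      have h1 : (1:ℝ) ≤ F.card := by exact_mod_cast hF1
      linarith
  calc _ = ((E.card : ℝ) - F.card) / 2 := by rw [step1, step3, step4]
    _ ≤ ((D.card : ℝ) - 1) / 2 := by linarith
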